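/- Let N be the 5-dimensional commutative ℂ-algebra with basis e₁, …, e₅ and nonzero products e₁e₁ = e₂, e₁e₂ = e₂e₁ = e₃, e₁e₃ = e₃e₁ = e₄, e₂e₂ = e₅, e₃e₃ = e₅ (all other products of basis vectors are zero). Then N is a nilpotent commutative algebra, and N does not satisfy the CD identity; in particular, ((e₁e₁)e₁)e₃ + ((e₁e₃)e₁)e₁ + e₁((e₁e₃)e₁) = e₅ ≠ 0 = ((e₁e₁)e₃)e₁ + ((e₁e₁)e₃)e₁ + e₁((e₁e₁)e₃). -/
import Mathlib


/-- The multiplication of the 5-dimensional commutative algebra `N` with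
`e₁e₁ = e₂`, `e₁e₂ = e₂e₁ = e₃`, `e₁e₃ = e₃e₁ = e₄`, `e₂e₂ = e₅`, `e₃e₃ = e₅`
(all other products of basis vectors zero), on the carrier `Fin 5 → ℂ`. -/
def mulN (u v : Fin 5 → ℂ) : Fin 5 → ℂ :=
  ![0, u 0 * v 0, u 0 * v 1 + u 1 * v 0, u 0 * v 2 + u 2 * v 0, u 1 * v 1 + u 2 * v 2]

/-- `IsWord n x` holds iff `x` is a product (in some association) of exactly `n` elements
of the algebra; thus `Nⁿ = span {x | IsWord n x}`, and `N` is nilpotent iff all such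
products vanish for some `n`. -/
inductive IsWord : ℕ → (Fin 5 → ℂ) → Prop
  | single (x : Fin 5 → ℂ) : IsWord 1 x
  | mul {m n : ℕ} {x y : Fin 5 → ℂ} : IsWord m x → IsWord n y → IsWord (m + n) (mulN x y)

lemma word_pos {n : ℕ} {x : Fin 5 → ℂ} (h : IsWord n x) : 1 ≤ n := by
  induction h <;> omega

lemma word_filtration : ∀ n : ℕ, ∀ x : Fin 5 → ℂ, IsWord n x →
    (2 ≤ n → x 0 = 0) ∧ (3 ≤ n → x 1 = 0) ∧ (4 ≤ n → x 2 = 0) ∧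
    (5 ≤ n → x 3 = 0) ∧ (7 ≤ n → x 4 = 0) := by
  intro n x h
  induction h with
  | single x => exact ⟨by omega, by omega, by omega, by omega, by omega⟩
  | @mul m n u v hu hv ihu ihv =>
    obtain ⟨u0, u1, u2, u3, u4⟩ := ihu
    obtain ⟨v0, v1, v2, v3, v4⟩ := ihv
    have hm : 1 ≤ m := word_pos hu
    have hn : 1 ≤ n := word_pos hv
    refine ⟨fun _ => rfl, fun h => ?_, fun h => ?_, fun h => ?_, fun h => ?_⟩
    · show u 0 * v 0 = 0
      rcases le_or_gt 2 m with hm2 | hm2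
      · rw [u0 hm2]; ring
      · rw [v0 (by omega)]; ring
    · show u 0 * v 1 + u 1 * v 0 = 0
      rcases le_or_gt 2 m with hm2 | hm2
      · rcases le_or_gt 2 n with hn2 | hn2
        · rw [u0 hm2, v0 hn2]; ring
        · rw [u0 hm2, u1 (by omega)]; ring
      · rw [v0 (by omega), v1 (by omega)]; ring
    · show u 0 * v 2 + u 2 * v 0 = 0
      rcases le_or_gt 2 m with hm2 | hm2
      · rcases le_or_gt 2 n with hn2 | hn2
        · rcases le_or_gt 4 m with hm4 | hm4
          · rw [u0 hm2, u2 hm4]; ring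
          · rw [u0 hm2, v0 hn2]; ring
        · rw [u0 hm2, u2 (by omega)]; ring
      · rw [v0 (by omega), v2 (by omega)]; ring
    · show u 1 * v 1 + u 2 * v 2 = 0
      rcases le_or_gt 4 m with hm4 | hm4
      · rw [u1 (by omega), u2 hm4]; ring
      · rcases le_or_gt 3 m with hm3 | hm3
        · rw [u1 hm3, v2 (by omega)]; ring
        · rw [v1 (by omega), v2 (by omega)]; ring

/-- The algebra `N` is a nilpotent commutative algebra which does not satisfy the CD
identity; in particular `((e₁e₁)e₁)e₃ + ((e₁e₃)e₁)e₁ + e₁((e₁e₃)e₁) = e₅ ≠ 0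
= ((e₁e₁)e₃)e₁ + ((e₁e₁)e₃)e₁ + e₁((e₁e₁)e₃)`. -/
theorem stmt16 :
    (∀ u v : Fin 5 → ℂ, mulN u v = mulN v u) ∧
    (∃ n : ℕ, 1 ≤ n ∧ ∀ x : Fin 5 → ℂ, IsWord n x → x = 0) ∧
    ¬(∀ x y a b : Fin 5 → ℂ,
      mulN (mulN (mulN x y) a) b + mulN (mulN (mulN x b) a) y + mulN x (mulN (mulN y b) a)
        = mulN (mulN (mulN x y) b) a + mulN (mulN (mulN x a) b) y
            + mulN x (mulN (mulN y a) b)) ∧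
    (mulN (mulN (mulN ![1,0,0,0,0] ![1,0,0,0,0]) ![1,0,0,0,0]) ![0,0,1,0,0]
        + mulN (mulN (mulN ![1,0,0,0,0] ![0,0,1,0,0]) ![1,0,0,0,0]) ![1,0,0,0,0]
        + mulN ![1,0,0,0,0] (mulN (mulN ![1,0,0,0,0] ![0,0,1,0,0]) ![1,0,0,0,0])
      = ![0,0,0,0,1]) ∧
    (![0,0,0,0,1] : Fin 5 → ℂ) ≠ 0 ∧
    (mulN (mulN (mulN ![1,0,0,0,0] ![1,0,0,0,0]) ![0,0,1,0,0]) ![1,0,0,0,0]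
        + mulN (mulN (mulN ![1,0,0,0,0] ![1,0,0,0,0]) ![0,0,1,0,0]) ![1,0,0,0,0]
        + mulN ![1,0,0,0,0] (mulN (mulN ![1,0,0,0,0] ![1,0,0,0,0]) ![0,0,1,0,0])
      = 0) := by
  have hLHS : mulN (mulN (mulN ![1,0,0,0,0] ![1,0,0,0,0]) ![1,0,0,0,0]) ![0,0,1,0,0]
        + mulN (mulN (mulN ![1,0,0,0,0] ![0,0,1,0,0]) ![1,0,0,0,0]) ![1,0,0,0,0]
        + mulN ![1,0,0,0,0] (mulN (mulN ![1,0,0,0,0] ![0,0,1,0,0]) ![1,0,0,0,0])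
      = ![0,0,0,0,1] := by
    funext i; fin_cases i <;> simp [mulN]
  have hRHS : mulN (mulN (mulN ![1,0,0,0,0] ![1,0,0,0,0]) ![0,0,1,0,0]) ![1,0,0,0,0]
        + mulN (mulN (mulN ![1,0,0,0,0] ![1,0,0,0,0]) ![0,0,1,0,0]) ![1,0,0,0,0]
        + mulN ![1,0,0,0,0] (mulN (mulN ![1,0,0,0,0] ![1,0,0,0,0]) ![0,0,1,0,0])
      = 0 := by
    funext i; fin_cases i <;> simp [mulN]
  have hne : (![0,0,0,0,1] : Fin 5 → ℂ) ≠ 0 := by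
    intro hcontra
    have := congrFun hcontra 4
    simp at this
  refine ⟨?_, ⟨7, by norm_num, ?_⟩, ?_, hLHS, hne, hRHS⟩
  · intro u v; funext i; fin_cases i <;> simp [mulN] <;> ring
  · intro x hx
    obtain ⟨h0, h1, h2, h3, h4⟩ := word_filtration 7 x hx
    funext i; fin_cases i
    · exact h0 (by norm_num)
    · exact h1 (by norm_num)
    · exact h2 (by norm_num)
    · exact h3 (by norm_num)
    · exact h4 le_rfl
  · intro h
    have := h ![1,0,0,0,0] ![1,0,0,0,0] ![1,0,0,0,0] ![0,0,1,0,0]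
    rw [hLHS, hRHS] at this
    exact hne this
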